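/- Fix d ≥ 2, 0 < p⋆ ≤ 1/(2(d+1)), and η₁, η₂ ∈ Δ_d, and let P₁, P₂ be the laws of a length-m trajectory under (M_{η₁}, p) and (M_{η₂}, p) respectively. Let N_{d+1}(x) = ∑_{t=1}^m 1{x_t = d+1}. Then for every n with 1 ≤ n and 2n ≤ m + 1: TV( P₁(· | N_{d+1} ≤ n), P₂(· | N_{d+1} ≤ n) ) ≤ TV( η₁^{⊗n}, η₂^{⊗n} ). -/

import Mathlib

open Finset

noncomputable section

/-- A row-stochastic matrix. -/
def IsStochastic {d : ℕ} (M : Matrix (Fin d) (Fin d) ℝ) : Prop :=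
  (∀ i j, 0 ≤ M i j) ∧ ∀ i, ∑ j, M i j = 1

/-- A probability distribution on `Fin d`. -/
def IsDist {d : ℕ} (μ : Fin d → ℝ) : Prop :=
  (∀ i, 0 ≤ μ i) ∧ ∑ i, μ i = 1

/-- Probability of a length-`m` trajectory under the Markov chain `(M, μ)`:
`μ(x₁) ∏_{t=1}^{m-1} M(x_t, x_{t+1})`. -/
def trajP {d m : ℕ} (M : Matrix (Fin d) (Fin d) ℝ) (μ : Fin d → ℝ)
    (x : Fin m → Fin d) : ℝ :=
  (if h : 0 < m then μ (x ⟨0, h⟩) else 1) *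
    ∏ t : Fin (m - 1),
      M (x ⟨t.1, by have h2 := t.2; omega⟩) (x ⟨t.1 + 1, by have h2 := t.2; omega⟩)


/-- The distribution `p` on `[d+1]`: `p(d+1) = p⋆`, `p(i) = (1-p⋆)/d` for `i ∈ [d]`. -/
def pInit (d : ℕ) (ps : ℝ) : Fin (d + 1) → ℝ :=
  fun i => if i.1 = d then ps else (1 - ps) / d

/-- The chain `M_η ∈ G_{p⋆}`: rows `1,…,d` equal `p`, row `d+1` is `(η(1),…,η(d),0)`. -/
def MG (d : ℕ) (ps : ℝ) (η : Fin d → ℝ) : Matrix (Fin (d + 1)) (Fin (d + 1)) ℝ :=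
  Matrix.of fun i j =>
    if i.1 = d then (if h : j.1 = d then 0 else η ⟨j.1, by have h2 := j.2; omega⟩)
    else pInit d ps j

/-- Number of visits to state `d+1` in a trajectory. -/
def Nlast (d m : ℕ) (x : Fin m → Fin (d + 1)) : ℕ :=
  (Finset.univ.filter (fun t => (x t).1 = d)).card

open scoped Classical in
/-- The conditional distribution of a length-`m` trajectory of `(M_η, p)` given the
event `E` (with the convention `0/0 = 0`). -/
def condP {d m : ℕ} (ps : ℝ) (η : Fin d → ℝ)
    (E : (Fin m → Fin (d + 1)) → Prop) (x : Fin m → Fin (d + 1)) : ℝ :=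
  (if E x then trajP (MG d ps η) (pInit d ps) x else 0) /
    ∑ y, if E y then trajP (MG d ps η) (pInit d ps) y else 0

/-- Total variation distance between two distributions on a finite set. -/
def tvDist {S : Type*} [Fintype S] (P Q : S → ℝ) : ℝ := (1 / 2) * ∑ x, |P x - Q x|

/-- The `n`-fold product distribution `η^{⊗n}` on `[d]^n`. -/
def prodP {d : ℕ} (η : Fin d → ℝ) (n : ℕ) (x : Fin n → Fin d) : ℝ := ∏ s, η (x s)

-- ===== auxiliary development =====

namespace TVAux

def etaExt {d : ℕ} (η : Fin d → ℝ) : Fin (d + 1) → ℝ :=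
  fun j => if h : j.1 < d then η ⟨j.1, h⟩ else 0

def ctIdx {m : ℕ} (t : Fin (m - 1)) : Fin m := ⟨t.1, by have := t.2; omega⟩
def stIdx {m : ℕ} (t : Fin (m - 1)) : Fin m := ⟨t.1 + 1, by have := t.2; omega⟩

lemma stIdx_injective {m : ℕ} : Function.Injective (stIdx (m := m)) := by
  intro a b h
  have h2 : (stIdx a).1 = (stIdx b).1 := congrArg Fin.val h
  simp only [stIdx] at h2
  exact Fin.ext (by omega)

lemma ctIdx_injective {m : ℕ} : Function.Injective (ctIdx (m := m)) := by
  intro a b h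
  have h2 : (ctIdx a).1 = (ctIdx b).1 := congrArg Fin.val h
  simp only [ctIdx] at h2
  exact Fin.ext h2

lemma trajP_eq {d m : ℕ} (M : Matrix (Fin (d+1)) (Fin (d+1)) ℝ) (μ : Fin (d+1) → ℝ)
    (x : Fin m → Fin (d+1)) :
    trajP M μ x = (if h : 0 < m then μ (x ⟨0, h⟩) else 1) *
      ∏ t : Fin (m-1), M (x (ctIdx t)) (x (stIdx t)) := rfl

def MG1 (d : ℕ) (ps : ℝ) : Matrix (Fin (d+1)) (Fin (d+1)) ℝ := MG d ps (fun _ => 1)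

lemma MG1_apply (d : ℕ) (ps : ℝ) (i j : Fin (d+1)) :
    MG1 d ps i j = if i.1 = d then (if j.1 = d then 0 else 1)
      else (if j.1 = d then ps else (1 - ps)/d) := by
  simp only [MG1, MG, Matrix.of_apply, pInit]
  split_ifs <;> rfl

lemma mg_factor (d : ℕ) (ps : ℝ) (η : Fin d → ℝ) (i j : Fin (d+1)) :
    MG d ps η i j = MG1 d ps i j * (if i.1 = d then etaExt η j else 1) := by
  simp only [MG, MG1, Matrix.of_apply, etaExt]
  by_cases hi : i.1 = d
  · by_cases hj : j.1 = d
    · have : ¬ (j.1 < d) := by omega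
      simp [hi, hj, this]
    · have hj' : j.1 < d := by have := j.2; omega
      simp [hi, hj, hj']
  · simp [hi]

def SmSet {d m : ℕ} (x : Fin m → Fin (d+1)) : Finset (Fin (m-1)) :=
  Finset.univ.filter (fun t => (x (ctIdx t)).1 = d)

def Good {d m : ℕ} (x : Fin m → Fin (d+1)) : Prop :=
  ∀ t : Fin (m-1), (x (ctIdx t)).1 = d → (x (stIdx t)).1 ≠ d

def Agood (d : ℕ) (ps : ℝ) {m : ℕ} (x : Fin m → Fin (d+1)) : ℝ :=
  trajP (MG1 d ps) (pInit d ps) x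

lemma trajP_factor (d : ℕ) (ps : ℝ) (η : Fin d → ℝ) {m : ℕ} (x : Fin m → Fin (d+1)) :
    trajP (MG d ps η) (pInit d ps) x =
      Agood d ps x * ∏ t ∈ SmSet x, etaExt η (x (stIdx t)) := by
  rw [trajP_eq, Agood, trajP_eq]
  rw [show (∏ t : Fin (m-1), MG d ps η (x (ctIdx t)) (x (stIdx t)))
      = ∏ t : Fin (m-1), (MG1 d ps (x (ctIdx t)) (x (stIdx t)) *
        (if (x (ctIdx t)).1 = d then etaExt η (x (stIdx t)) else 1)) from
    Finset.prod_congr rfl fun t _ => mg_factor ..]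
  rw [Finset.prod_mul_distrib, SmSet, Finset.prod_filter]
  ring

lemma bad_zero {d m : ℕ} (ps : ℝ) (η : Fin d → ℝ) {x : Fin m → Fin (d+1)}
    (hx : ¬ Good x) : trajP (MG d ps η) (pInit d ps) x = 0 := by
  rw [trajP_eq]
  simp only [Good, not_forall] at hx
  obtain ⟨t, h1, h2⟩ := hx
  apply mul_eq_zero_of_right
  apply Finset.prod_eq_zero (Finset.mem_univ t)
  simp only [MG, Matrix.of_apply]
  rw [if_pos h1, dif_pos (not_not.mp h2)]


-- ===== indicator congruence =====

lemma smSet_congr {d m : ℕ} {x x' : Fin m → Fin (d+1)}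
    (h : ∀ s, (x s).1 = d ↔ (x' s).1 = d) : SmSet x = SmSet x' := by
  unfold SmSet
  exact Finset.filter_congr (fun t _ => by simpa using h (ctIdx t))

lemma nlast_congr {d m : ℕ} {x x' : Fin m → Fin (d+1)}
    (h : ∀ s, (x s).1 = d ↔ (x' s).1 = d) : Nlast d m x = Nlast d m x' := by
  unfold Nlast
  congr 1
  exact Finset.filter_congr (fun t _ => by simpa using h t)

lemma good_congr {d m : ℕ} {x x' : Fin m → Fin (d+1)}
    (h : ∀ s, (x s).1 = d ↔ (x' s).1 = d) : Good x ↔ Good x' := by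
  unfold Good
  constructor
  · intro hg t ht hst
    exact hg t ((h _).2 ht) ((h _).2 hst)
  · intro hg t ht hst
    exact hg t ((h _).1 ht) ((h _).1 hst)

lemma agood_congr {d m : ℕ} (ps : ℝ) {x x' : Fin m → Fin (d+1)}
    (h : ∀ s, (x s).1 = d ↔ (x' s).1 = d) : Agood d ps x = Agood d ps x' := by
  unfold Agood
  rw [trajP_eq, trajP_eq]
  congr 1
  · split_ifs with hm
    · simp only [pInit]
      rw [if_congr (h _) rfl rfl]
    · rfl
  · apply Finset.prod_congr rfl
    intro t _
    rw [MG1_apply, MG1_apply,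
      if_congr (h _) (if_congr (h _) rfl rfl) (if_congr (h _) rfl rfl)]

-- ===== skeletons =====

def Pset {d m : ℕ} (x : Fin m → Fin (d+1)) : Finset (Fin m) := (SmSet x).image stIdx

lemma pset_congr {d m : ℕ} {x x' : Fin m → Fin (d+1)}
    (h : ∀ s, (x s).1 = d ↔ (x' s).1 = d) : Pset x = Pset x' := by
  unfold Pset; rw [smSet_congr h]

lemma mem_pset_ne {d m : ℕ} {x : Fin m → Fin (d+1)} (hx : Good x) {s : Fin m}
    (hs : s ∈ Pset x) : (x s).1 ≠ d := by
  obtain ⟨t, ht, rfl⟩ := Finset.mem_image.1 hs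
  exact hx t (by simpa [SmSet] using ht)

lemma mem_pset_lt {d m : ℕ} (hd : 0 < d) {x : Fin m → Fin (d+1)} (hx : Good x) {s : Fin m}
    (hs : s ∈ Pset x) : (x s).1 < d := by
  have h1 := mem_pset_ne hx hs
  have h2 := (x s).2
  omega

def skel {d m : ℕ} (hd : 0 < d) (x : Fin m → Fin (d+1)) : Fin m → Fin (d+1) :=
  fun s => if s ∈ Pset x then ⟨0, by omega⟩ else x s

lemma skel_sameInd {d m : ℕ} (hd : 0 < d) {x : Fin m → Fin (d+1)} (hx : Good x) :
    ∀ s, ((skel hd x) s).1 = d ↔ (x s).1 = d := by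
  intro s
  unfold skel
  by_cases h : s ∈ Pset x
  · rw [if_pos h]
    simp only
    have := mem_pset_ne hx h
    constructor
    · intro h0; omega
    · intro h0; exact absurd h0 this
  · rw [if_neg h]

lemma skel_pset {d m : ℕ} (hd : 0 < d) {x : Fin m → Fin (d+1)} (hx : Good x) :
    Pset (skel hd x) = Pset x := pset_congr (skel_sameInd hd hx)

lemma skel_good {d m : ℕ} (hd : 0 < d) {x : Fin m → Fin (d+1)} (hx : Good x) :
    Good (skel hd x) := (good_congr (skel_sameInd hd hx)).2 hx

lemma skel_idem {d m : ℕ} (hd : 0 < d) {x : Fin m → Fin (d+1)} (hx : Good x) :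
    skel hd (skel hd x) = skel hd x := by
  funext s
  show (if s ∈ Pset (skel hd x) then _ else _) = _
  rw [skel_pset hd hx]
  by_cases h : s ∈ Pset x
  · rw [if_pos h]
    show _ = (if s ∈ Pset x then _ else x s)
    rw [if_pos h]
  · rw [if_neg h]

lemma skel_fixed_val {d m : ℕ} (hd : 0 < d) {w : Fin m → Fin (d+1)}
    (hw : skel hd w = w) {s : Fin m} (hs : s ∈ Pset w) : w s = ⟨0, by omega⟩ := by
  conv_lhs => rw [← hw]
  unfold skel
  rw [if_pos hs]

-- ===== fill =====

def Fill {d m : ℕ} (w : Fin m → Fin (d+1)) (y : {s // s ∈ Pset w} → Fin d) :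
    Fin m → Fin (d+1) :=
  fun s => if h : s ∈ Pset w then ⟨(y ⟨s, h⟩).1, by have := (y ⟨s, h⟩).2; omega⟩ else w s

lemma fill_sameInd {d m : ℕ} (hd : 0 < d) {w : Fin m → Fin (d+1)}
    (hw : skel hd w = w) (y : {s // s ∈ Pset w} → Fin d) :
    ∀ s, ((Fill w y) s).1 = d ↔ (w s).1 = d := by
  intro s
  unfold Fill
  by_cases h : s ∈ Pset w
  · rw [dif_pos h, skel_fixed_val hd hw h]
    simp only
    have h1 := (y ⟨s, h⟩).2
    constructor
    · intro h0; omega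
    · intro h0; omega
  · rw [dif_neg h]

lemma fill_pset {d m : ℕ} (hd : 0 < d) {w : Fin m → Fin (d+1)}
    (hw : skel hd w = w) (y : {s // s ∈ Pset w} → Fin d) :
    Pset (Fill w y) = Pset w := pset_congr (fill_sameInd hd hw y)

lemma fill_good {d m : ℕ} (hd : 0 < d) {w : Fin m → Fin (d+1)}
    (hw1 : Good w) (hw : skel hd w = w) (y : {s // s ∈ Pset w} → Fin d) :
    Good (Fill w y) := (good_congr (fill_sameInd hd hw y)).2 hw1

lemma fill_skel {d m : ℕ} (hd : 0 < d) {w : Fin m → Fin (d+1)}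
    (hw : skel hd w = w) (y : {s // s ∈ Pset w} → Fin d) :
    skel hd (Fill w y) = w := by
  funext s
  show (if s ∈ Pset (Fill w y) then _ else _) = _
  rw [fill_pset hd hw y]
  by_cases h : s ∈ Pset w
  · rw [if_pos h, skel_fixed_val hd hw h]
  · rw [if_neg h]
    show (if h' : s ∈ Pset w then _ else w s) = w s
    rw [dif_neg h]


-- ===== skeleton fiber decomposition =====

open scoped Classical in
def SK (d m : ℕ) (hd : 0 < d) : Finset (Fin m → Fin (d+1)) :=
  Finset.univ.filter (fun w => Good w ∧ skel hd w = w)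

open scoped Classical in
lemma mem_SK {d m : ℕ} (hd : 0 < d) {w : Fin m → Fin (d+1)} :
    w ∈ SK d m hd ↔ Good w ∧ skel hd w = w := by
  unfold SK
  rw [Finset.mem_filter]
  simp

open scoped Classical in
lemma sum_skel {d m : ℕ} (hd : 0 < d) (f : (Fin m → Fin (d+1)) → ℝ)
    (h0 : ∀ x, ¬ Good x → f x = 0) :
    ∑ x : Fin m → Fin (d+1), f x
      = ∑ w ∈ SK d m hd, ∑ y : {s // s ∈ Pset w} → Fin d, f (Fill w y) := by
  have step1 : ∑ x : Fin m → Fin (d+1), f x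
      = ∑ x ∈ Finset.univ.filter (fun x => Good x), f x := by
    refine (Finset.sum_filter_of_ne ?_).symm
    intro x _ hfx
    by_contra h
    exact hfx (h0 x h)
  have hmap : ∀ x ∈ Finset.univ.filter (fun x : Fin m → Fin (d+1) => Good x),
      skel hd x ∈ SK d m hd := by
    intro x hx
    have hgx : Good x := (Finset.mem_filter.1 hx).2
    exact Finset.mem_filter.2 ⟨Finset.mem_univ _, skel_good hd hgx, skel_idem hd hgx⟩
  rw [step1, ← Finset.sum_fiberwise_of_maps_to hmap f]
  refine Finset.sum_congr rfl fun w hw => ?_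
  obtain ⟨-, hw1, hw2⟩ := Finset.mem_filter.1 hw
  have hleft : ∀ x ∈ (Finset.univ.filter (fun x : Fin m → Fin (d+1) => Good x)).filter
      (fun x => skel hd x = w),
      Fill w (fun s' => if h : (x s'.1).1 < d then ⟨(x s'.1).1, h⟩ else ⟨0, hd⟩) = x := by
    intro x hx
    obtain ⟨hx1, hx2⟩ := Finset.mem_filter.1 hx
    have hgx : Good x := (Finset.mem_filter.1 hx1).2
    have hpw : Pset w = Pset x := by
      rw [← hx2, skel_pset hd hgx]
    funext s
    show (if h : s ∈ Pset w then _ else w s) = x s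
    by_cases h : s ∈ Pset w
    · rw [dif_pos h]
      have hlt : (x s).1 < d := mem_pset_lt hd hgx (hpw ▸ h)
      apply Fin.ext
      show ((if h' : (x s).1 < d then (⟨(x s).1, h'⟩ : Fin d) else ⟨0, hd⟩) : Fin d).1
        = (x s).1
      rw [dif_pos hlt]
    · rw [dif_neg h]
      rw [← hx2]
      show (if _ ∈ Pset x then _ else x s) = x s
      rw [if_neg (by rw [← hpw]; exact h)]
  refine Finset.sum_bij'
    (i := fun x _ => fun s' => if h : (x s'.1).1 < d then ⟨(x s'.1).1, h⟩ else ⟨0, hd⟩)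
    (j := fun y _ => Fill w y) (fun x hx => Finset.mem_univ _) ?_ ?_ ?_ ?_
  · -- hj : Fill w y in fiber
    intro y _
    refine Finset.mem_filter.2 ⟨Finset.mem_filter.2 ⟨Finset.mem_univ _, ?_⟩, ?_⟩
    · exact fill_good hd hw1 hw2 y
    · exact fill_skel hd hw2 y
  · -- left_inv
    exact hleft
  · -- right_inv : i (Fill w y) = y
    intro y _
    funext s'
    have h1 : Fill w y s'.1 = ⟨(y s').1, by have := (y s').2; omega⟩ := by
      show (if h : s'.1 ∈ Pset w then _ else _) = _
      rw [dif_pos s'.2]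
    show (if h : (Fill w y s'.1).1 < d then (⟨(Fill w y s'.1).1, h⟩ : Fin d)
        else ⟨0, hd⟩) = y s'
    apply Fin.ext
    rw [h1]
    show ((if h : (y s').1 < d then (⟨(y s').1, h⟩ : Fin d) else ⟨0, hd⟩) : Fin d).1
      = (y s').1
    rw [dif_pos (y s').2]
  · intro x hx
    exact (congrArg f (hleft x hx)).symm



-- ===== sums over function spaces =====

lemma sum_prod_fun {d : ℕ} {ι : Type*} [Fintype ι] [DecidableEq ι] (η : Fin d → ℝ)
    (hη : ∑ j, η j = 1) :
    ∑ y : ι → Fin d, ∏ i, η (y i) = 1 := by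
  rw [← Fintype.prod_sum (fun (_ : ι) (j : Fin d) => η j)]
  simp [hη]

lemma step_mono {d : ℕ} (η₁ η₂ : Fin d → ℝ) (hs1 : ∑ j, η₁ j = 1)
    (hs2 : ∑ j, η₂ j = 1) (k : ℕ) :
    (∑ z : Fin k → Fin d, |(∏ i, η₁ (z i)) - ∏ i, η₂ (z i)|)
      ≤ ∑ z : Fin (k+1) → Fin d, |(∏ i, η₁ (z i)) - ∏ i, η₂ (z i)| := by
  have key : ∑ z : Fin (k+1) → Fin d, |(∏ i, η₁ (z i)) - ∏ i, η₂ (z i)|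
      = ∑ p : Fin d × (Fin k → Fin d),
          |η₁ p.1 * (∏ i, η₁ (p.2 i)) - η₂ p.1 * ∏ i, η₂ (p.2 i)| := by
    rw [← Equiv.sum_comp (Fin.consEquiv (fun _ : Fin (k+1) => Fin d))
        (fun z => |(∏ i, η₁ (z i)) - ∏ i, η₂ (z i)|)]
    refine Finset.sum_congr rfl fun p _ => ?_
    simp only [Fin.consEquiv, Equiv.coe_fn_mk, Fin.prod_univ_succ, Fin.cons_zero, Fin.cons_succ]
  rw [key, Fintype.sum_prod_type, Finset.sum_comm]
  refine Finset.sum_le_sum fun z _ => ?_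
  have hrw : (∏ i, η₁ (z i)) - ∏ i, η₂ (z i)
      = ∑ a, (η₁ a * (∏ i, η₁ (z i)) - η₂ a * ∏ i, η₂ (z i)) := by
    rw [Finset.sum_sub_distrib, ← Finset.sum_mul, ← Finset.sum_mul, hs1, hs2,
      one_mul, one_mul]
  rw [hrw]
  exact Finset.abs_sum_le_sum_abs _ _

lemma sum_abs_mono {d : ℕ} (η₁ η₂ : Fin d → ℝ) (hs1 : ∑ j, η₁ j = 1)
    (hs2 : ∑ j, η₂ j = 1) {k n : ℕ} (hkn : k ≤ n) :
    (∑ z : Fin k → Fin d, |(∏ i, η₁ (z i)) - ∏ i, η₂ (z i)|)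
      ≤ ∑ z : Fin n → Fin d, |(∏ i, η₁ (z i)) - ∏ i, η₂ (z i)| := by
  induction n, hkn using Nat.le_induction with
  | base => exact le_refl _
  | succ n hn ih => exact ih.trans (step_mono η₁ η₂ hs1 hs2 n)

lemma sum_abs_fun_le {d n : ℕ} {ι : Type*} [Fintype ι] [DecidableEq ι]
    (η₁ η₂ : Fin d → ℝ) (hs1 : ∑ j, η₁ j = 1) (hs2 : ∑ j, η₂ j = 1)
    (hcard : Fintype.card ι ≤ n) :
    (∑ y : ι → Fin d, |(∏ i, η₁ (y i)) - ∏ i, η₂ (y i)|)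
      ≤ ∑ z : Fin n → Fin d, |(∏ i, η₁ (z i)) - ∏ i, η₂ (z i)| := by
  have e : ι ≃ Fin (Fintype.card ι) := Fintype.equivFin ι
  have hre : (∑ y : ι → Fin d, |(∏ i, η₁ (y i)) - ∏ i, η₂ (y i)|)
      = ∑ z : Fin (Fintype.card ι) → Fin d, |(∏ i, η₁ (z i)) - ∏ i, η₂ (z i)| := by
    rw [← Equiv.sum_comp (Equiv.arrowCongr e (Equiv.refl (Fin d)))
        (fun z => |(∏ i, η₁ (z i)) - ∏ i, η₂ (z i)|)]
    refine Finset.sum_congr rfl fun y _ => ?_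
    have p1 : ∏ i, η₁ ((Equiv.arrowCongr e (Equiv.refl (Fin d))) y i)
        = ∏ i, η₁ (y i) := by
      simp only [Equiv.arrowCongr_apply, Function.comp, Equiv.refl_apply]
      exact Equiv.prod_comp e.symm (fun j => η₁ (y j))
    have p2 : ∏ i, η₂ ((Equiv.arrowCongr e (Equiv.refl (Fin d))) y i)
        = ∏ i, η₂ (y i) := by
      simp only [Equiv.arrowCongr_apply, Function.comp, Equiv.refl_apply]
      exact Equiv.prod_comp e.symm (fun j => η₂ (y j))
    rw [p1, p2]
  rw [hre]
  exact sum_abs_mono η₁ η₂ hs1 hs2 hcard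


-- ===== fiber product computation =====

lemma fill_prod {d m : ℕ} (hd : 0 < d) {w : Fin m → Fin (d+1)} (hw : skel hd w = w)
    (η : Fin d → ℝ) (y : {s // s ∈ Pset w} → Fin d) :
    (∏ t ∈ SmSet (Fill w y), etaExt η ((Fill w y) (stIdx t)))
      = ∏ s : {s // s ∈ Pset w}, η (y s) := by
  rw [smSet_congr (fill_sameInd hd hw y)]
  have key : ∀ t ∈ SmSet w, etaExt η ((Fill w y) (stIdx t))
      = (fun s : Fin m => if h : s ∈ Pset w then η (y ⟨s, h⟩) else 1) (stIdx t) := by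
    intro t ht
    have hmem : stIdx t ∈ Pset w := Finset.mem_image_of_mem _ ht
    have h1 : Fill w y (stIdx t)
        = ⟨(y ⟨stIdx t, hmem⟩).1, by have := (y ⟨stIdx t, hmem⟩).2; omega⟩ := by
      show (if h : stIdx t ∈ Pset w then _ else _) = _
      rw [dif_pos hmem]
    rw [h1]
    show etaExt η _ = (if h : stIdx t ∈ Pset w then η (y ⟨stIdx t, h⟩) else 1)
    rw [dif_pos hmem]
    unfold etaExt
    rw [dif_pos ((y ⟨stIdx t, hmem⟩).2 :
      ((⟨(y ⟨stIdx t, hmem⟩).1, by have := (y ⟨stIdx t, hmem⟩).2; omega⟩ : Fin (d+1))).1 < d)]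
  rw [Finset.prod_congr rfl key]
  have h2 := Finset.prod_image (s := SmSet w) (g := stIdx)
    (f := fun s : Fin m => if h : s ∈ Pset w then η (y ⟨s, h⟩) else 1)
    (fun a _ b _ h => stIdx_injective h)
  rw [← h2]
  have h3 : Finset.image stIdx (SmSet w) = Pset w := rfl
  rw [h3]
  rw [show (∏ s : {s // s ∈ Pset w}, η (y s))
      = ∏ s ∈ (Pset w).attach, η (y s) from by rw [← Finset.univ_eq_attach]]
  rw [← Finset.prod_attach (Pset w)
    (fun s => (fun s : Fin m => if h : s ∈ Pset w then η (y ⟨s, h⟩) else 1) s)]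
  refine Finset.prod_congr rfl fun s _ => ?_
  show (if h : s.1 ∈ Pset w then η (y ⟨s.1, h⟩) else 1) = η (y s)
  rw [dif_pos s.2]

lemma card_pset_le {d m n : ℕ} {w : Fin m → Fin (d+1)} (hN : Nlast d m w ≤ n) :
    Fintype.card {s // s ∈ Pset w} ≤ n := by
  rw [Fintype.card_coe]
  have h1 : (Pset w).card = (SmSet w).card :=
    Finset.card_image_of_injective _ stIdx_injective
  have h2 : (SmSet w).card
      ≤ (Finset.univ.filter (fun t : Fin m => (w t).1 = d)).card := by
    apply Finset.card_le_card_of_injOn ctIdx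
    · intro t ht
      simp only [SmSet, Finset.mem_filter] at ht ⊢
      simpa [SmSet] using ht
    · exact fun a _ b _ h => ctIdx_injective h
  calc (Pset w).card = (SmSet w).card := h1
    _ ≤ _ := h2
    _ ≤ n := hN

-- ===== gTraj =====

open scoped Classical in
def gTraj {d m : ℕ} (ps : ℝ) (η : Fin d → ℝ) (E : (Fin m → Fin (d + 1)) → Prop)
    (x : Fin m → Fin (d + 1)) : ℝ :=
  if E x then trajP (MG d ps η) (pInit d ps) x else 0

lemma gTraj_bad {d m : ℕ} (ps : ℝ) (η : Fin d → ℝ) (E : (Fin m → Fin (d+1)) → Prop)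
    {x : Fin m → Fin (d+1)} (hx : ¬ Good x) : gTraj ps η E x = 0 := by
  unfold gTraj
  by_cases h : E x
  · rw [if_pos h, bad_zero ps η hx]
  · rw [if_neg h]

lemma pInit_nonneg {d : ℕ} (ps : ℝ) (h0 : 0 ≤ ps) (h1 : ps ≤ 1) (j : Fin (d+1)) :
    0 ≤ pInit d ps j := by
  unfold pInit
  split_ifs
  · exact h0
  · apply div_nonneg (by linarith) (Nat.cast_nonneg d)

lemma trajP_nonneg {d m : ℕ} (ps : ℝ) (h0 : 0 ≤ ps) (h1 : ps ≤ 1)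
    (η : Fin d → ℝ) (hη : ∀ i, 0 ≤ η i) (x : Fin m → Fin (d+1)) :
    0 ≤ trajP (MG d ps η) (pInit d ps) x := by
  rw [trajP_eq]
  apply mul_nonneg
  · split_ifs
    · exact pInit_nonneg ps h0 h1 _
    · norm_num
  · apply Finset.prod_nonneg
    intro t _
    show (0:ℝ) ≤ MG d ps η _ _
    simp only [MG, Matrix.of_apply]
    split_ifs
    · norm_num
    · exact hη _
    · exact pInit_nonneg ps h0 h1 _

lemma agood_nonneg {d m : ℕ} (ps : ℝ) (h0 : 0 ≤ ps) (h1 : ps ≤ 1)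
    (x : Fin m → Fin (d+1)) : 0 ≤ Agood d ps x :=
  trajP_nonneg ps h0 h1 (fun _ => 1) (fun _ => by norm_num) x

lemma gTraj_nonneg {d m : ℕ} (ps : ℝ) (h0 : 0 ≤ ps) (h1 : ps ≤ 1)
    (η : Fin d → ℝ) (hη : ∀ i, 0 ≤ η i) (E : (Fin m → Fin (d+1)) → Prop)
    (x : Fin m → Fin (d+1)) : 0 ≤ gTraj ps η E x := by
  unfold gTraj
  split_ifs with h
  · exact trajP_nonneg ps h0 h1 η hη x
  · exact le_refl _

-- ===== the three main sums =====

lemma Zsum {d m n : ℕ} (hd : 0 < d) (ps : ℝ) (η : Fin d → ℝ) (hη : ∑ j, η j = 1) :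
    ∑ x : Fin m → Fin (d+1), gTraj ps η (fun x => Nlast d m x ≤ n) x
      = ∑ w ∈ SK d m hd, gTraj ps (fun _ => 1) (fun x => Nlast d m x ≤ n) w := by
  rw [sum_skel hd _ (fun x hx => gTraj_bad ps η _ hx)]
  refine Finset.sum_congr rfl fun w hw => ?_
  obtain ⟨hw1, hw2⟩ := (mem_SK hd).1 hw
  have hNfill : ∀ y, Nlast d m (Fill w y) = Nlast d m w :=
    fun y => nlast_congr (fill_sameInd hd hw2 y)
  by_cases hE : Nlast d m w ≤ n
  · have hterm : ∀ y : {s // s ∈ Pset w} → Fin d,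
        gTraj ps η (fun x => Nlast d m x ≤ n) (Fill w y)
          = Agood d ps w * ∏ s : {s // s ∈ Pset w}, η (y s) := by
      intro y
      unfold gTraj
      rw [if_pos (by show Nlast d m (Fill w y) ≤ n; rw [hNfill y]; exact hE)]
      rw [trajP_factor, fill_prod hd hw2 η y,
        agood_congr ps (fill_sameInd hd hw2 y)]
    rw [Finset.sum_congr rfl (fun y _ => hterm y), ← Finset.mul_sum,
      sum_prod_fun η hη, mul_one]
    unfold gTraj
    rw [if_pos hE]
    rfl
  · have hterm : ∀ y : {s // s ∈ Pset w} → Fin d,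
        gTraj ps η (fun x => Nlast d m x ≤ n) (Fill w y) = 0 := by
      intro y
      unfold gTraj
      rw [if_neg (show ¬ Nlast d m (Fill w y) ≤ n by rw [hNfill y]; exact hE)]
    rw [Finset.sum_congr rfl (fun y _ => hterm y), Finset.sum_const, smul_zero]
    unfold gTraj
    rw [if_neg hE]

lemma Zpos {d m n : ℕ} (hd : 0 < d) (ps : ℝ) (hps0 : 0 ≤ ps) (hps1 : ps < 1)
    (η : Fin d → ℝ) (hη0 : ∀ i, 0 ≤ η i) :
    0 < ∑ x : Fin m → Fin (d+1), gTraj ps η (fun x => Nlast d m x ≤ n) x := by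
  have hpd : (0:ℝ) < (1 - ps) / d := by
    apply div_pos (by linarith) (by exact_mod_cast hd)
  apply Finset.sum_pos'
  · intro x _
    exact gTraj_nonneg ps hps0 (le_of_lt hps1) η hη0 _ x
  · refine ⟨fun _ => (⟨0, by omega⟩ : Fin (d+1)), Finset.mem_univ _, ?_⟩
    have hne : ((⟨0, by omega⟩ : Fin (d+1))).1 ≠ d := by
      simp only
      omega
    have hE : Nlast d m (fun _ => (⟨0, by omega⟩ : Fin (d+1))) ≤ n := by
      unfold Nlast
      have : (Finset.univ.filter
          (fun t : Fin m => ((fun _ => (⟨0, by omega⟩ : Fin (d+1))) t).1 = d)) = ∅ := by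
        apply Finset.filter_false_of_mem
        intro t _
        exact hne
      rw [this]
      simp
    unfold gTraj
    rw [if_pos hE, trajP_eq]
    apply mul_pos
    · split_ifs
      · unfold pInit
        rw [if_neg hne]
        exact hpd
      · norm_num
    · apply Finset.prod_pos
      intro t _
      show (0:ℝ) < MG d ps η _ _
      simp only [MG, Matrix.of_apply]
      rw [if_neg hne]
      unfold pInit
      rw [if_neg hne]
      exact hpd

lemma Tsum {d m n : ℕ} (hd : 0 < d) (ps : ℝ) (hps0 : 0 ≤ ps) (hps1 : ps ≤ 1)
    (η₁ η₂ : Fin d → ℝ) (hs1 : ∑ j, η₁ j = 1) (hs2 : ∑ j, η₂ j = 1) :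
    ∑ x : Fin m → Fin (d+1),
        |gTraj ps η₁ (fun x => Nlast d m x ≤ n) x
          - gTraj ps η₂ (fun x => Nlast d m x ≤ n) x|
      ≤ (∑ w ∈ SK d m hd, gTraj ps (fun _ => 1) (fun x => Nlast d m x ≤ n) w) *
          ∑ z : Fin n → Fin d, |(∏ i, η₁ (z i)) - ∏ i, η₂ (z i)| := by
  rw [sum_skel hd (fun x => |gTraj ps η₁ (fun x => Nlast d m x ≤ n) x
      - gTraj ps η₂ (fun x => Nlast d m x ≤ n) x|)
    (fun x hx => by
      show |gTraj ps η₁ (fun x => Nlast d m x ≤ n) x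
        - gTraj ps η₂ (fun x => Nlast d m x ≤ n) x| = 0
      rw [gTraj_bad ps η₁ _ hx, gTraj_bad ps η₂ _ hx, sub_zero, abs_zero])]
  rw [Finset.sum_mul]
  refine Finset.sum_le_sum fun w hw => ?_
  obtain ⟨hw1, hw2⟩ := (mem_SK hd).1 hw
  have hNfill : ∀ y, Nlast d m (Fill w y) = Nlast d m w :=
    fun y => nlast_congr (fill_sameInd hd hw2 y)
  by_cases hE : Nlast d m w ≤ n
  · have hterm : ∀ y : {s // s ∈ Pset w} → Fin d,
        |gTraj ps η₁ (fun x => Nlast d m x ≤ n) (Fill w y)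
          - gTraj ps η₂ (fun x => Nlast d m x ≤ n) (Fill w y)|
          = Agood d ps w * |(∏ s : {s // s ∈ Pset w}, η₁ (y s))
              - ∏ s : {s // s ∈ Pset w}, η₂ (y s)| := by
      intro y
      unfold gTraj
      rw [if_pos (by show Nlast d m (Fill w y) ≤ n; rw [hNfill y]; exact hE), if_pos (by show Nlast d m (Fill w y) ≤ n; rw [hNfill y]; exact hE)]
      rw [trajP_factor d ps η₁, trajP_factor d ps η₂, fill_prod hd hw2 η₁ y,
        fill_prod hd hw2 η₂ y, agood_congr ps (fill_sameInd hd hw2 y),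
        ← mul_sub, abs_mul, abs_of_nonneg (agood_nonneg ps hps0 hps1 w)]
    rw [Finset.sum_congr rfl (fun y _ => hterm y), ← Finset.mul_sum]
    have hbound := sum_abs_fun_le (ι := {s // s ∈ Pset w}) η₁ η₂ hs1 hs2
      (card_pset_le hE)
    have hA : gTraj ps (fun _ => 1) (fun x => Nlast d m x ≤ n) w = Agood d ps w := by
      unfold gTraj
      rw [if_pos hE]
      rfl
    rw [hA]
    exact mul_le_mul_of_nonneg_left hbound (agood_nonneg ps hps0 hps1 w)
  · have hterm : ∀ y : {s // s ∈ Pset w} → Fin d,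
        |gTraj ps η₁ (fun x => Nlast d m x ≤ n) (Fill w y)
          - gTraj ps η₂ (fun x => Nlast d m x ≤ n) (Fill w y)| = 0 := by
      intro y
      unfold gTraj
      rw [if_neg (show ¬ Nlast d m (Fill w y) ≤ n by rw [hNfill y]; exact hE),
        if_neg (show ¬ Nlast d m (Fill w y) ≤ n by rw [hNfill y]; exact hE),
        sub_zero, abs_zero]
    rw [Finset.sum_congr rfl (fun y _ => hterm y), Finset.sum_const, smul_zero]
    have hA : gTraj ps (fun _ => 1) (fun x => Nlast d m x ≤ n) w = 0 := by
      unfold gTraj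
      rw [if_neg hE]
    rw [hA, zero_mul]

end TVAux

/-- Combined decoupling bound: the TV distance between the conditional trajectory
laws given `N_{d+1} ≤ n` is at most the TV distance between `η₁^{⊗n}` and
`η₂^{⊗n}`. -/
theorem tv_cond_le_le_tv_product
    (d m : ℕ) (hd : 2 ≤ d) (ps : ℝ) (hps : 0 < ps) (hps2 : ps ≤ 1 / (2 * ((d : ℝ) + 1)))
    (η₁ η₂ : Fin d → ℝ) (h1 : IsDist η₁) (h2 : IsDist η₂)
    (n : ℕ) (hn1 : 1 ≤ n) (hn2 : 2 * n ≤ m + 1) :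
    tvDist (condP (m := m) ps η₁ (fun x => Nlast d m x ≤ n))
        (condP (m := m) ps η₂ (fun x => Nlast d m x ≤ n)) ≤
      tvDist (prodP η₁ n) (prodP η₂ n) := by
  have hd0 : 0 < d := by omega
  have hps1 : ps < 1 := by
    have h2d : (2:ℝ) ≤ (d:ℝ) := by exact_mod_cast hd
    have hpos : (0:ℝ) < 2 * ((d:ℝ) + 1) := by linarith
    have hlt : 1 / (2 * ((d:ℝ) + 1)) < 1 := by
      rw [div_lt_one hpos]
      linarith
    linarith
  have hcond : ∀ η : Fin d → ℝ, condP (m := m) ps η (fun x => Nlast d m x ≤ n)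
      = fun x => TVAux.gTraj ps η (fun x => Nlast d m x ≤ n) x
          / ∑ y : Fin m → Fin (d+1), TVAux.gTraj ps η (fun x => Nlast d m x ≤ n) y :=
    fun η => rfl
  have hZ1 : ∑ y : Fin m → Fin (d+1), TVAux.gTraj ps η₁ (fun x => Nlast d m x ≤ n) y
      = ∑ w ∈ TVAux.SK d m hd0, TVAux.gTraj ps (fun _ => 1) (fun x => Nlast d m x ≤ n) w :=
    TVAux.Zsum hd0 ps η₁ h1.2
  have hZ2 : ∑ y : Fin m → Fin (d+1), TVAux.gTraj ps η₂ (fun x => Nlast d m x ≤ n) y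
      = ∑ w ∈ TVAux.SK d m hd0, TVAux.gTraj ps (fun _ => 1) (fun x => Nlast d m x ≤ n) w :=
    TVAux.Zsum hd0 ps η₂ h2.2
  have hCpos : 0 < ∑ w ∈ TVAux.SK d m hd0,
      TVAux.gTraj ps (fun _ => 1) (fun x => Nlast d m x ≤ n) w := by
    rw [← hZ1]
    exact TVAux.Zpos hd0 ps hps.le hps1 η₁ h1.1
  rw [hcond η₁, hcond η₂]
  unfold tvDist
  simp only []
  rw [hZ1, hZ2]
  have hptwise : ∀ x : Fin m → Fin (d+1),
      |TVAux.gTraj ps η₁ (fun x => Nlast d m x ≤ n) x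
          / (∑ w ∈ TVAux.SK d m hd0,
              TVAux.gTraj ps (fun _ => 1) (fun x => Nlast d m x ≤ n) w)
        - TVAux.gTraj ps η₂ (fun x => Nlast d m x ≤ n) x
          / (∑ w ∈ TVAux.SK d m hd0,
              TVAux.gTraj ps (fun _ => 1) (fun x => Nlast d m x ≤ n) w)|
      = |TVAux.gTraj ps η₁ (fun x => Nlast d m x ≤ n) x
          - TVAux.gTraj ps η₂ (fun x => Nlast d m x ≤ n) x|
          / (∑ w ∈ TVAux.SK d m hd0,
              TVAux.gTraj ps (fun _ => 1) (fun x => Nlast d m x ≤ n) w) := by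
    intro x
    rw [div_sub_div_same, abs_div, abs_of_pos hCpos]
  rw [Finset.sum_congr rfl (fun x _ => hptwise x), ← Finset.sum_div]
  have hT := TVAux.Tsum (m := m) (n := n) hd0 ps hps.le hps1.le η₁ η₂ h1.2 h2.2
  have hdiv : (∑ x : Fin m → Fin (d+1),
        |TVAux.gTraj ps η₁ (fun x => Nlast d m x ≤ n) x
          - TVAux.gTraj ps η₂ (fun x => Nlast d m x ≤ n) x|)
        / (∑ w ∈ TVAux.SK d m hd0,
            TVAux.gTraj ps (fun _ => 1) (fun x => Nlast d m x ≤ n) w)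
      ≤ ∑ z : Fin n → Fin d, |(∏ i, η₁ (z i)) - ∏ i, η₂ (z i)| := by
    rw [div_le_iff₀ hCpos]
    calc _ ≤ _ := hT
      _ = _ := mul_comm _ _
  have hprod : (∑ z : Fin n → Fin d, |prodP η₁ n z - prodP η₂ n z|)
      = ∑ z : Fin n → Fin d, |(∏ i, η₁ (z i)) - ∏ i, η₂ (z i)| := rfl
  rw [hprod]
  linarith

end
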